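/- Let χ be a primitive Dirichlet character modulo q, let K ≥ 1 and H be integers with any two of q, H, K coprime, and let H̄ denote the integer with H·H̄ ≡ 1 (mod Kq) and 0 < H̄ ≤ Kq. Let α ∈ ℂ and s ∈ ℂ with Re(s) > 1 + max(0, Re(α)). Then Σ_{1 ≤ u,v ≤ Kq} χ(u)χ(v) e(uvH/(Kq)) F(s−α, u/(Kq)) F(s, v/(Kq)) = χ(H̄) τ(χ) K · Σ_{j=0}^{q−1} Σ_{m ≥ 1} Σ_{n ≥ 1} m^{−(s−α)} n^{−s} e(m(−n+Kj)H̄/(Kq)) χ̄(j) χ(−n+Kj). -/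

import Mathlib

open Complex Filter Finset

noncomputable section

/-- `e(x) = e^{2πix}`. -/
def e (x : ℝ) : ℂ := Complex.exp (2 * Real.pi * I * x)

/-- The Gauss sum `τ(χ) = ∑_{a mod q} χ(a) e(a/q)`. -/
def gaussTau (q : ℕ) (χ : DirichletCharacter ℂ q) : ℂ :=
  ∑ a ∈ Finset.range q, χ (a : ZMod q) * e ((a : ℝ) / q)

/-- `F(s,x) = ∑_{n ≥ 1} e(nx) n^{-s}` (as a series). -/
def Fser (s : ℂ) (x : ℝ) : ℂ := ∑' n : ℕ+, e ((n : ℝ) * x) * (n : ℂ) ^ (-s)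

lemma e_add (x y : ℝ) : e (x + y) = e x * e y := by
  simp only [e, ← Complex.exp_add]; push_cast; ring_nf

lemma e_int {N : ℕ} [NeZero N] (j : ℤ) :
    e ((j : ℝ) / N) = ZMod.stdAddChar ((j : ZMod N)) := by
  rw [ZMod.stdAddChar_coe, e]; push_cast; ring_nf

lemma e_nat {N : ℕ} [NeZero N] (j : ℕ) :
    e ((j : ℝ) / N) = ZMod.stdAddChar ((j : ZMod N)) := by
  simpa using e_int (N := N) (j : ℤ)

lemma norm_e (x : ℝ) : ‖e x‖ = 1 := by
  simp only [e, Complex.norm_exp]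
  norm_num [Complex.mul_re, Complex.mul_im]

lemma norm_stdAddChar {N : ℕ} [NeZero N] (x : ZMod N) : ‖ZMod.stdAddChar x‖ = 1 := by
  rw [← ZMod.natCast_zmod_val x, ← e_nat]; exact norm_e _

lemma stdAddChar_eq_one_iff {N : ℕ} [NeZero N] (x : ZMod N) :
    ZMod.stdAddChar x = 1 ↔ x = 0 := by
  constructor
  · intro h
    apply ZMod.injective_toCircle (N := N)
    have h0 : (ZMod.toCircle x : ℂ) = (ZMod.toCircle (0 : ZMod N) : ℂ) := by
      rw [← ZMod.stdAddChar_apply, ← ZMod.stdAddChar_apply, h, AddChar.map_zero_eq_one]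
    exact Circle.coe_inj.1 h0
  · rintro rfl; exact AddChar.map_zero_eq_one _

lemma sum_univ_zmod {N : ℕ} [NeZero N] (g : ZMod N → ℂ) :
    ∑ x : ZMod N, g x = ∑ i ∈ range N, g (i : ZMod N) := by
  rw [Finset.sum_nbij' (i := fun (x : ZMod N) => x.val) (j := fun (i : ℕ) => (i : ZMod N))
    (s := Finset.univ) (t := range N)]
  · intro a _; exact mem_range.2 a.val_lt
  · intro a _; exact mem_univ _
  · intro a _; exact ZMod.natCast_zmod_val a
  · intro a ha; exact ZMod.val_natCast_of_lt (mem_range.1 ha)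
  · intro a _; rw [ZMod.natCast_zmod_val]

lemma sum_decomp {q K : ℕ} [NeZero q] [NeZero K] (g : ZMod (K * q) → ℂ) :
    ∑ x : ZMod (K * q), g x = ∑ a ∈ range q, ∑ b ∈ range K, g ((a + q * b : ℕ)) := by
  haveI : NeZero (K * q) := ⟨mul_ne_zero (NeZero.ne K) (NeZero.ne q)⟩
  have hq : 0 < q := Nat.pos_of_ne_zero (NeZero.ne q)
  rw [sum_univ_zmod]
  have h2 : ∑ a ∈ range q, ∑ b ∈ range K, g ((a + q * b : ℕ))
      = ∑ p ∈ (range q) ×ˢ (range K), g ((p.1 + q * p.2 : ℕ)) :=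
    (Finset.sum_product (s := range q) (t := range K)
      (f := fun p => g ((p.1 + q * p.2 : ℕ)))).symm
  rw [h2]
  refine Finset.sum_nbij' (s := range (K*q)) (t := (range q) ×ˢ (range K))
    (f := fun i => g (i : ZMod (K*q))) (g := fun p => g ((p.1 + q * p.2 : ℕ)))
    (i := fun i => (i % q, i / q)) (j := fun p => p.1 + q * p.2) ?_ ?_ ?_ ?_ ?_
  · intro i hi
    refine Finset.mem_product.2 ⟨mem_range.2 (Nat.mod_lt _ hq), mem_range.2 ?_⟩
    exact (Nat.div_lt_iff_lt_mul hq).2 (mem_range.1 hi)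
  · intro p hp
    obtain ⟨h1, h2⟩ := Finset.mem_product.1 hp
    have h1' := mem_range.1 h1
    have h2' := mem_range.1 h2
    refine mem_range.2 (lt_of_lt_of_le (b := q * (p.2 + 1)) ?_ ?_)
    · show p.1 + q * p.2 < q * (p.2 + 1)
      have hr : q * (p.2 + 1) = q + q * p.2 := by ring
      omega
    · calc q * (p.2 + 1) ≤ q * K := Nat.mul_le_mul_left q (Nat.succ_le_of_lt h2')
      _ = K * q := Nat.mul_comm q K
  · intro i _
    have := Nat.mod_add_div i q
    simp only [Prod.fst, Prod.snd]
    omega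
  · intro p hp
    obtain ⟨h1, h2⟩ := Finset.mem_product.1 hp
    have h1' := mem_range.1 h1
    have e1 : (p.1 + q * p.2) % q = p.1 := by
      rw [Nat.add_mul_mod_self_left, Nat.mod_eq_of_lt h1']
    have e2 : (p.1 + q * p.2) / q = p.2 := by
      rw [Nat.add_mul_div_left _ _ hq, Nat.div_eq_of_lt h1', zero_add]
    exact Prod.ext e1 e2
  · intro i _
    show g (i : ZMod (K*q)) = g ((i % q + q * (i / q) : ℕ) : ZMod (K*q))
    rw [Nat.mod_add_div i q]

lemma sum_decomp' {q K : ℕ} [NeZero q] [NeZero K] (g : ZMod (K * q) → ℂ) :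
    ∑ x : ZMod (K * q), g x = ∑ j ∈ range q, ∑ b ∈ range K, g ((b + K * j : ℕ)) := by
  haveI : NeZero (K * q) := ⟨mul_ne_zero (NeZero.ne K) (NeZero.ne q)⟩
  have hK : 0 < K := Nat.pos_of_ne_zero (NeZero.ne K)
  rw [sum_univ_zmod]
  have h2 : ∑ j ∈ range q, ∑ b ∈ range K, g ((b + K * j : ℕ))
      = ∑ p ∈ (range q) ×ˢ (range K), g ((p.2 + K * p.1 : ℕ)) :=
    (Finset.sum_product (s := range q) (t := range K)
      (f := fun p => g ((p.2 + K * p.1 : ℕ)))).symm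
  rw [h2]
  refine Finset.sum_nbij' (s := range (K*q)) (t := (range q) ×ˢ (range K))
    (f := fun i => g (i : ZMod (K*q))) (g := fun p => g ((p.2 + K * p.1 : ℕ)))
    (i := fun i => (i / K, i % K)) (j := fun p => p.2 + K * p.1) ?_ ?_ ?_ ?_ ?_
  · intro i hi
    refine Finset.mem_product.2 ⟨mem_range.2 ?_, mem_range.2 (Nat.mod_lt _ hK)⟩
    have := mem_range.1 hi
    have hc : K * q = q * K := Nat.mul_comm K q
    exact (Nat.div_lt_iff_lt_mul hK).2 (by omega)
  · intro p hp
    obtain ⟨h1, h2⟩ := Finset.mem_product.1 hp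
    have h1' := mem_range.1 h1
    have h2' := mem_range.1 h2
    refine mem_range.2 (lt_of_lt_of_le (b := K * (p.1 + 1)) ?_ ?_)
    · show p.2 + K * p.1 < K * (p.1 + 1)
      have hr : K * (p.1 + 1) = K + K * p.1 := by ring
      omega
    · exact Nat.mul_le_mul_left K (Nat.succ_le_of_lt h1')
  · intro i _
    have := Nat.mod_add_div i K
    simp only [Prod.fst, Prod.snd]
    omega
  · intro p hp
    obtain ⟨h1, h2⟩ := Finset.mem_product.1 hp
    have h2' := mem_range.1 h2
    have e1 : (p.2 + K * p.1) / K = p.1 := by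
      rw [Nat.add_mul_div_left _ _ hK, Nat.div_eq_of_lt h2', zero_add]
    have e2 : (p.2 + K * p.1) % K = p.2 := by
      rw [Nat.add_mul_mod_self_left, Nat.mod_eq_of_lt h2']
    exact Prod.ext e1 e2
  · intro i _
    show g (i : ZMod (K*q)) = g ((i % K + K * (i / K) : ℕ) : ZMod (K*q))
    rw [Nat.mod_add_div i K]

lemma geom_sum_root {K : ℕ} [NeZero K] {ζ : ℂ} (hζ : ζ ^ K = 1) :
    ∑ b ∈ range K, ζ ^ b = if ζ = 1 then (K : ℂ) else 0 := by
  split_ifs with h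
  · subst h; simp
  · rw [geom_sum_eq h, hζ]; simp

section core
variable {q K : ℕ} [NeZero q] [NeZero K]

instance : NeZero (K * q) := ⟨mul_ne_zero (NeZero.ne K) (NeZero.ne q)⟩

lemma gaussTau_eq (χ : DirichletCharacter ℂ q) :
    gaussTau q χ = gaussSum χ ZMod.stdAddChar := by
  rw [gaussSum, sum_univ_zmod fun a => χ a * ZMod.stdAddChar a, gaussTau]
  exact Finset.sum_congr rfl fun i _ => by rw [e_nat]

lemma stdAddChar_K_mul (x : ZMod (K * q)) :
    ZMod.stdAddChar ((K : ZMod (K * q)) * x)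
      = ZMod.stdAddChar (ZMod.castHom (dvd_mul_left q K) (ZMod q) x) := by
  have hK0 : (K : ℝ) ≠ 0 := Nat.cast_ne_zero.2 (NeZero.ne K)
  conv_lhs => rw [← ZMod.natCast_zmod_val x]
  rw [← Nat.cast_mul, ← e_nat, ZMod.castHom_apply, ← ZMod.natCast_val, ← e_nat]
  congr 1
  rw [Nat.cast_mul, Nat.cast_mul, mul_div_mul_left _ _ hK0]

lemma SV_eq (χ : DirichletCharacter ℂ q) (t : ZMod (K * q)) :
    ∑ v : ZMod (K * q), χ (ZMod.castHom (dvd_mul_left q K) (ZMod q) v) * ZMod.stdAddChar (v * t)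
      = (∑ a ∈ range q, χ (a : ZMod q) * ZMod.stdAddChar ((a : ZMod (K * q)) * t))
        * ∑ b ∈ range K, (ZMod.stdAddChar ((q : ZMod (K * q)) * t)) ^ b := by
  rw [sum_decomp, Finset.sum_mul]
  refine Finset.sum_congr rfl fun a _ => ?_
  rw [Finset.mul_sum]
  refine Finset.sum_congr rfl fun b _ => ?_
  have h1 : ((a + q * b : ℕ) : ZMod (K * q)) = (a : ZMod (K * q)) + (q : ZMod (K * q)) * b := by
    push_cast; ring
  have hc : ZMod.castHom (dvd_mul_left q K) (ZMod q) ((a + q * b : ℕ) : ZMod (K * q))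
      = (a : ZMod q) := by
    rw [map_natCast]; push_cast [ZMod.natCast_self]; ring
  rw [hc, h1]
  have h2 : ((a : ZMod (K * q)) + (q : ZMod (K * q)) * b) * t
      = (a : ZMod (K * q)) * t + b • ((q : ZMod (K * q)) * t) := by
    rw [nsmul_eq_mul]; ring
  rw [h2, AddChar.map_add_eq_mul, AddChar.map_nsmul_eq_pow]
  ring

lemma SV_Kmul (χ : DirichletCharacter ℂ q) (hχ : χ.IsPrimitive) (t : ZMod (K * q)) :
    ∑ v : ZMod (K * q), χ (ZMod.castHom (dvd_mul_left q K) (ZMod q) v)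
        * ZMod.stdAddChar (v * ((K : ZMod (K * q)) * t))
      = (K : ℂ) * (χ⁻¹ (ZMod.castHom (dvd_mul_left q K) (ZMod q) t) * gaussTau q χ) := by
  rw [SV_eq]
  have h0 : (q : ZMod (K * q)) * ((K : ZMod (K * q)) * t) = 0 := by
    rw [← mul_assoc, ← Nat.cast_mul, Nat.mul_comm q K, ZMod.natCast_self, zero_mul]
  rw [h0]
  simp only [AddChar.map_zero_eq_one, one_pow, Finset.sum_const, Finset.card_range,
    nsmul_eq_mul, mul_one]
  have h1 : ∀ a : ℕ, (a : ZMod (K * q)) * ((K : ZMod (K * q)) * t)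
      = (K : ZMod (K * q)) * ((a : ZMod (K * q)) * t) := fun a => by ring
  have h2 : ∑ a ∈ range q, χ (a : ZMod q) * ZMod.stdAddChar ((a : ZMod (K * q)) * ((K : ZMod (K * q)) * t))
      = ∑ a ∈ range q, χ (a : ZMod q)
          * ZMod.stdAddChar ((a : ZMod q) * (ZMod.castHom (dvd_mul_left q K) (ZMod q) t)) := by
    refine Finset.sum_congr rfl fun a _ => ?_
    rw [h1, stdAddChar_K_mul, map_mul, map_natCast (ZMod.castHom (dvd_mul_left q K) (ZMod q)) a]
  rw [h2, ← sum_univ_zmod (fun a => χ a * ZMod.stdAddChar (a * ZMod.castHom (dvd_mul_left q K) (ZMod q) t))]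
  have h3 : ∑ a : ZMod q, χ a * ZMod.stdAddChar (a * ZMod.castHom (dvd_mul_left q K) (ZMod q) t)
      = gaussSum χ (ZMod.stdAddChar.mulShift (ZMod.castHom (dvd_mul_left q K) (ZMod q) t)) := by
    rw [gaussSum]
    exact Finset.sum_congr rfl fun a _ => by rw [AddChar.mulShift_apply, mul_comm a]
  rw [h3, gaussSum_mulShift_of_isPrimitive _ hχ, gaussTau_eq]
  ring

lemma SV_vanish (χ : DirichletCharacter ℂ q) (t : ZMod (K * q))
    (ht : (q : ZMod (K * q)) * t ≠ 0) :
    ∑ v : ZMod (K * q), χ (ZMod.castHom (dvd_mul_left q K) (ZMod q) v)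
        * ZMod.stdAddChar (v * t) = 0 := by
  rw [SV_eq]
  have hpow : (ZMod.stdAddChar ((q : ZMod (K * q)) * t)) ^ K = 1 := by
    rw [← AddChar.map_nsmul_eq_pow, nsmul_eq_mul, ← mul_assoc, ← Nat.cast_mul,
      ZMod.natCast_self, zero_mul, AddChar.map_zero_eq_one]
  rw [geom_sum_root hpow, if_neg (fun h => ht ((stdAddChar_eq_one_iff _).1 h)), mul_zero]

end core

lemma charSum {q K : ℕ} [NeZero q] [NeZero K] (χ : DirichletCharacter ℂ q) (hχ : χ.IsPrimitive)
    (H Hbar : ℤ) (hH : (H : ZMod (K * q)) * (Hbar : ZMod (K * q)) = 1) (m n : ℤ) :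
    ∑ u : ZMod (K * q), ∑ v : ZMod (K * q),
      χ (ZMod.castHom (dvd_mul_left q K) (ZMod q) u)
        * χ (ZMod.castHom (dvd_mul_left q K) (ZMod q) v)
        * ZMod.stdAddChar ((H : ZMod (K * q)) * u * v
            + (m : ZMod (K * q)) * u + (n : ZMod (K * q)) * v)
      = χ ((Hbar : ZMod q)) * gaussTau q χ * (K : ℂ)
        * ∑ j ∈ range q, χ⁻¹ (j : ZMod q) * χ (((-n + K * j : ℤ) : ZMod q))
            * ZMod.stdAddChar (((m * (-n + K * j) * Hbar : ℤ) : ZMod (K * q))) := by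
  set c := ZMod.castHom (dvd_mul_left q K) (ZMod q) with hc
  set ψ := (ZMod.stdAddChar : AddChar (ZMod (K * q)) ℂ) with hψ
  set SVf : ZMod (K * q) → ℂ := fun t => ∑ v : ZMod (K * q), χ (c v) * ψ (v * t) with hSVf
  have hH' : (Hbar : ZMod (K * q)) * (H : ZMod (K * q)) = 1 := by
    rw [mul_comm (Hbar : ZMod (K * q))]; exact hH
  have hunit : IsUnit ((Hbar : ZMod (K * q))) := IsUnit.of_mul_eq_one _ hH'
  have step1 : ∑ u : ZMod (K * q), ∑ v : ZMod (K * q),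
      χ (c u) * χ (c v) * ψ ((H : ZMod (K * q)) * u * v
        + (m : ZMod (K * q)) * u + (n : ZMod (K * q)) * v)
      = ∑ u : ZMod (K * q), χ (c u) * ψ ((m : ZMod (K * q)) * u)
          * SVf ((H : ZMod (K * q)) * u + (n : ZMod (K * q))) := by
    refine Finset.sum_congr rfl fun u _ => ?_
    rw [hSVf]
    simp only
    rw [Finset.mul_sum]
    refine Finset.sum_congr rfl fun v _ => ?_
    have harg : (H : ZMod (K * q)) * u * v + (m : ZMod (K * q)) * u + (n : ZMod (K * q)) * v
        = (m : ZMod (K * q)) * u + v * ((H : ZMod (K * q)) * u + (n : ZMod (K * q))) := by ring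
    rw [harg, AddChar.map_add_eq_mul]
    ring
  rw [step1]
  have step2 : ∑ u : ZMod (K * q), χ (c u) * ψ ((m : ZMod (K * q)) * u)
      * SVf ((H : ZMod (K * q)) * u + (n : ZMod (K * q)))
      = ∑ w : ZMod (K * q), χ (c ((Hbar : ZMod (K * q)) * w))
          * ψ ((m : ZMod (K * q)) * ((Hbar : ZMod (K * q)) * w))
          * SVf (w + (n : ZMod (K * q))) := by
    refine (Fintype.sum_bijective (fun w => (Hbar : ZMod (K * q)) * w)
      (IsUnit.isUnit_iff_mulLeft_bijective.mp hunit) _ _ fun w => ?_).symm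
    have hw : (H : ZMod (K * q)) * ((Hbar : ZMod (K * q)) * w) = w := by
      rw [← mul_assoc, hH, one_mul]
    rw [hw]
  rw [step2]
  have step3 : ∑ w : ZMod (K * q), χ (c ((Hbar : ZMod (K * q)) * w))
      * ψ ((m : ZMod (K * q)) * ((Hbar : ZMod (K * q)) * w)) * SVf (w + (n : ZMod (K * q)))
      = χ ((Hbar : ZMod q)) * ∑ w : ZMod (K * q), χ (c w)
          * ψ ((m : ZMod (K * q)) * (Hbar : ZMod (K * q)) * w) * SVf (w + (n : ZMod (K * q))) := by
    rw [Finset.mul_sum]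
    refine Finset.sum_congr rfl fun w _ => ?_
    rw [map_mul, map_mul (χ : MulChar (ZMod q) ℂ), map_intCast c, ← mul_assoc]
    ring_nf
  rw [step3]
  have step4 : ∑ w : ZMod (K * q), χ (c w)
      * ψ ((m : ZMod (K * q)) * (Hbar : ZMod (K * q)) * w) * SVf (w + (n : ZMod (K * q)))
      = ∑ x : ZMod (K * q), χ (c (x - (n : ZMod (K * q))))
          * ψ ((m : ZMod (K * q)) * (Hbar : ZMod (K * q)) * (x - (n : ZMod (K * q)))) * SVf x := by
    refine (Fintype.sum_bijective (fun x => x - (n : ZMod (K * q)))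
      (Equiv.subRight ((n : ℤ) : ZMod (K * q))).bijective _ _ fun x => ?_).symm
    rw [sub_add_cancel]
  rw [step4]
  set G : ZMod (K * q) → ℂ := fun x => χ (c (x - (n : ZMod (K * q))))
      * ψ ((m : ZMod (K * q)) * (Hbar : ZMod (K * q)) * (x - (n : ZMod (K * q)))) * SVf x with hG
  have step5 : ∑ x : ZMod (K * q), G x = ∑ j ∈ range q, ∑ b ∈ range K, G ((b + K * j : ℕ)) :=
    sum_decomp' G
  have step6 : ∀ j ∈ range q, ∑ b ∈ range K, G ((b + K * j : ℕ)) = G ((K * j : ℕ)) := by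
    intro j hj
    have h0K : 0 ∈ range K := mem_range.2 (Nat.pos_of_ne_zero (NeZero.ne K))
    rw [Finset.sum_eq_single_of_mem 0 h0K]
    · norm_num
    · intro b hb hb0
      have hbK := mem_range.1 hb
      have hvan : SVf (((b + K * j : ℕ) : ZMod (K * q))) = 0 := by
        refine SV_vanish χ _ ?_
        have harg : (q : ZMod (K * q)) * ((b + K * j : ℕ) : ZMod (K * q))
            = ((q * b : ℕ) : ZMod (K * q)) := by
          have hKq : (K : ZMod (K * q)) * (q : ZMod (K * q)) = 0 := by
            rw [← Nat.cast_mul, ZMod.natCast_self]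
          push_cast
          linear_combination (j : ZMod (K * q)) * hKq
        rw [harg]
        intro hzero
        rw [ZMod.natCast_eq_zero_iff] at hzero
        have hlt : q * b < K * q := by
          calc q * b < q * K := (Nat.mul_lt_mul_left (Nat.pos_of_ne_zero (NeZero.ne q))).2 hbK
          _ = K * q := Nat.mul_comm q K
        exact Nat.mul_ne_zero (NeZero.ne q) hb0 (Nat.eq_zero_of_dvd_of_lt hzero hlt)
      rw [hG]
      simp only
      rw [hvan, mul_zero]
  rw [step5, Finset.sum_congr rfl step6]
  have step7 : ∀ j ∈ range q, G ((K * j : ℕ))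
      = gaussTau q χ * (K : ℂ) * (χ⁻¹ (j : ZMod q) * χ (((-n + K * j : ℤ) : ZMod q))
          * ψ (((m * (-n + K * j) * Hbar : ℤ) : ZMod (K * q)))) := by
    intro j hj
    have hKj : ((K * j : ℕ) : ZMod (K * q)) = (K : ZMod (K * q)) * (j : ZMod (K * q)) := by
      push_cast; ring
    have hSV : SVf (((K * j : ℕ) : ZMod (K * q)))
        = (K : ℂ) * (χ⁻¹ ((j : ZMod q)) * gaussTau q χ) := by
      show ∑ v : ZMod (K * q), χ (c v) * ψ (v * ((K * j : ℕ) : ZMod (K * q)))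
          = (K : ℂ) * (χ⁻¹ ((j : ZMod q)) * gaussTau q χ)
      rw [hKj]
      have := SV_Kmul (K := K) χ hχ ((j : ZMod (K * q)))
      rw [map_natCast c j] at this
      exact this
    have hchi : χ (c (((K * j : ℕ) : ZMod (K * q)) - (n : ZMod (K * q))))
        = χ (((-n + K * j : ℤ) : ZMod q)) := by
      congr 1
      rw [map_sub, map_natCast c, map_intCast c]
      push_cast
      ring
    have hpsi : ψ ((m : ZMod (K * q)) * (Hbar : ZMod (K * q))
          * (((K * j : ℕ) : ZMod (K * q)) - (n : ZMod (K * q))))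
        = ψ (((m * (-n + K * j) * Hbar : ℤ) : ZMod (K * q))) := by
      congr 1
      push_cast
      ring
    rw [hG]
    simp only
    rw [hchi, hpsi, hSV]
    ring
  rw [Finset.sum_congr rfl step7, ← Finset.mul_sum]
  ring

section analytic

lemma summable_pnat_rpow {r : ℝ} (hr : 1 < r) : Summable (fun n : ℕ+ => (n : ℝ) ^ (-r)) := by
  have h := (Real.summable_nat_rpow (p := -r)).2 (by linarith)
  exact h.comp_injective (fun a b hab => PNat.coe_injective hab)

lemma norm_cpow_pnat (w : ℂ) (m : ℕ+) : ‖((m : ℕ) : ℂ) ^ (-w)‖ = (m : ℝ) ^ (-w.re) := by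
  rw [Complex.norm_natCast_cpow_of_pos m.pos]
  simp [Complex.neg_re]

lemma summable_of_bound {p r : ℝ} (hp : 1 < p) (hr : 1 < r) (F : ℕ+ → ℕ+ → ℂ)
    (hF : ∀ m n, ‖F m n‖ ≤ (m : ℝ) ^ (-p) * (n : ℝ) ^ (-r)) :
    (∀ m, Summable (F m)) ∧ Summable (fun m => ∑' n, F m n) := by
  have hsr := summable_pnat_rpow hr
  have hsp := summable_pnat_rpow hp
  have h1 : ∀ m, Summable (F m) := fun m =>
    Summable.of_norm_bounded (hsr.mul_left ((m : ℝ) ^ (-p))) (hF m)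
  have hnorm : ∀ m, Summable fun n => ‖F m n‖ := fun m =>
    Summable.of_nonneg_of_le (fun _ => norm_nonneg _) (hF m) (hsr.mul_left _)
  refine ⟨h1, ?_⟩
  apply Summable.of_norm_bounded (hsp.mul_right (∑' n : ℕ+, (n : ℝ) ^ (-r)))
  intro m
  calc ‖∑' n, F m n‖ ≤ ∑' n, ‖F m n‖ := norm_tsum_le_tsum_norm (hnorm m)
  _ ≤ ∑' n : ℕ+, (m : ℝ) ^ (-p) * (n : ℝ) ^ (-r) :=
      Summable.tsum_le_tsum (hF m) (hnorm m) (hsr.mul_left _)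
  _ = (m : ℝ) ^ (-p) * ∑' n : ℕ+, (n : ℝ) ^ (-r) := tsum_mul_left

end analytic

lemma sum_Icc_range {N : ℕ} [NeZero N] (g : ZMod N → ℂ) :
    ∑ u ∈ Finset.Icc 1 N, g (u : ZMod N) = ∑ u ∈ range N, g (u : ZMod N) := by
  have e1 : (Finset.Icc 0 N) = insert 0 (Finset.Icc 1 N) := by
    ext x; simp only [Finset.mem_Icc, Finset.mem_insert]; omega
  have e2 : (Finset.Icc 0 N) = insert N (Finset.range N) := by
    ext x; simp only [Finset.mem_Icc, Finset.mem_insert, Finset.mem_range]; omega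
  have h1 : ∑ u ∈ Finset.Icc 0 N, g (u : ZMod N)
      = g ((0 : ℕ) : ZMod N) + ∑ u ∈ Finset.Icc 1 N, g (u : ZMod N) := by
    rw [e1, Finset.sum_insert (by simp)]
  have h2 : ∑ u ∈ Finset.Icc 0 N, g (u : ZMod N)
      = g ((N : ℕ) : ZMod N) + ∑ u ∈ Finset.range N, g (u : ZMod N) := by
    rw [e2, Finset.sum_insert (by simp)]
  have h3 : ((N : ℕ) : ZMod N) = ((0 : ℕ) : ZMod N) := by
    simp [ZMod.natCast_self]
  rw [h3] at h2
  have := h1.symm.trans h2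
  exact add_left_cancel this

lemma finite_part {q K : ℕ} [NeZero q] [NeZero K] (χ : DirichletCharacter ℂ q)
    (hχ : χ.IsPrimitive) (H Hbar : ℤ)
    (hH : (H : ZMod (K * q)) * (Hbar : ZMod (K * q)) = 1) (m n : ℕ) :
    ∑ u ∈ Finset.Icc 1 (K * q), ∑ v ∈ Finset.Icc 1 (K * q),
      χ (u : ZMod q) * χ (v : ZMod q) * e (((u * v * H : ℤ) : ℝ) / (K * q))
        * e (((m * u : ℤ) : ℝ) / (K * q)) * e (((n * v : ℤ) : ℝ) / (K * q))
      = χ ((Hbar : ZMod q)) * gaussTau q χ * (K : ℂ)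
        * ∑ j ∈ range q, χ⁻¹ (j : ZMod q) * χ (((-(n : ℤ) + K * j : ℤ) : ZMod q))
            * e ((((m : ℤ) * (-(n : ℤ) + K * j) * Hbar : ℤ) : ℝ) / (K * q)) := by
  set c := ZMod.castHom (dvd_mul_left q K) (ZMod q) with hc
  set Φ : ZMod (K * q) → ZMod (K * q) → ℂ := fun x y => χ (c x) * χ (c y)
    * ZMod.stdAddChar ((H : ZMod (K * q)) * x * y
        + ((m : ℤ) : ZMod (K * q)) * x + ((n : ℤ) : ZMod (K * q)) * y) with hΦ
  have hsummand : ∀ u v : ℕ,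
      χ (u : ZMod q) * χ (v : ZMod q) * e (((u * v * H : ℤ) : ℝ) / (K * q))
        * e (((m * u : ℤ) : ℝ) / (K * q)) * e (((n * v : ℤ) : ℝ) / (K * q))
      = Φ (u : ZMod (K * q)) (v : ZMod (K * q)) := by
    intro u v
    have h3 : e (((u * v * H : ℤ) : ℝ) / (K * q)) * e (((m * u : ℤ) : ℝ) / (K * q))
        * e (((n * v : ℤ) : ℝ) / (K * q))
        = ZMod.stdAddChar (((u * v * H + m * u + n * v : ℤ) : ZMod (K * q))) := by
      rw [← e_add, ← e_add, ← add_div, ← add_div]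
      rw [show (((u * v * H : ℤ) : ℝ) + ((m * u : ℤ) : ℝ) + ((n * v : ℤ) : ℝ))
          = (((u * v * H + m * u + n * v : ℤ)) : ℝ) by push_cast; ring]
      have hN : ((K * q : ℕ) : ℝ) = (K : ℝ) * (q : ℝ) := by push_cast; ring
      rw [← hN, e_int]
    have h4 : (((u * v * H + m * u + n * v : ℤ) : ZMod (K * q)))
        = (H : ZMod (K * q)) * (u : ZMod (K * q)) * (v : ZMod (K * q))
          + ((m : ℤ) : ZMod (K * q)) * (u : ZMod (K * q))
          + ((n : ℤ) : ZMod (K * q)) * (v : ZMod (K * q)) := by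
      push_cast; ring
    have h5 : (u : ZMod q) = c ((u : ZMod (K * q))) := (map_natCast c u).symm
    have h6 : (v : ZMod q) = c ((v : ZMod (K * q))) := (map_natCast c v).symm
    rw [hΦ]
    simp only
    rw [← h4, ← h3, h5, h6]
    ring
  calc ∑ u ∈ Finset.Icc 1 (K * q), ∑ v ∈ Finset.Icc 1 (K * q),
      χ (u : ZMod q) * χ (v : ZMod q) * e (((u * v * H : ℤ) : ℝ) / (K * q))
        * e (((m * u : ℤ) : ℝ) / (K * q)) * e (((n * v : ℤ) : ℝ) / (K * q))
      = ∑ u ∈ Finset.Icc 1 (K * q), ∑ v ∈ Finset.Icc 1 (K * q),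
          Φ (u : ZMod (K * q)) (v : ZMod (K * q)) := by
        exact Finset.sum_congr rfl fun u _ => Finset.sum_congr rfl fun v _ => hsummand u v
    _ = ∑ u ∈ Finset.Icc 1 (K * q), ∑ v ∈ range (K * q),
          Φ (u : ZMod (K * q)) (v : ZMod (K * q)) :=
        Finset.sum_congr rfl fun u _ => sum_Icc_range (Φ (u : ZMod (K * q)))
    _ = ∑ u ∈ range (K * q), ∑ v ∈ range (K * q),
          Φ (u : ZMod (K * q)) (v : ZMod (K * q)) :=
        sum_Icc_range (fun x => ∑ v ∈ range (K * q), Φ x (v : ZMod (K * q)))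
    _ = ∑ x : ZMod (K * q), ∑ y : ZMod (K * q), Φ x y := by
        rw [sum_univ_zmod (fun x => ∑ y : ZMod (K * q), Φ x y)]
        exact Finset.sum_congr rfl fun u _ => (sum_univ_zmod (Φ (u : ZMod (K * q)))).symm
    _ = χ ((Hbar : ZMod q)) * gaussTau q χ * (K : ℂ)
        * ∑ j ∈ range q, χ⁻¹ (j : ZMod q) * χ (((-(n : ℤ) + K * j : ℤ) : ZMod q))
            * ZMod.stdAddChar (((((m : ℤ)) * (-(n : ℤ) + K * j) * Hbar : ℤ) : ZMod (K * q))) := by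
        exact charSum χ hχ H Hbar hH (m : ℤ) (n : ℤ)
    _ = χ ((Hbar : ZMod q)) * gaussTau q χ * (K : ℂ)
        * ∑ j ∈ range q, χ⁻¹ (j : ZMod q) * χ (((-(n : ℤ) + K * j : ℤ) : ZMod q))
            * e ((((m : ℤ) * (-(n : ℤ) + K * j) * Hbar : ℤ) : ℝ) / (K * q)) := by
        congr 1
        refine Finset.sum_congr rfl fun j _ => ?_
        have hN : ((K * q : ℕ) : ℝ) = (K : ℝ) * (q : ℝ) := by push_cast; ring
        rw [← hN, e_int]

/-- **The opened-up form of `A₁`**: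
`A₁(s,α,0,H/(Kq),χ) = χ(H̄) τ(χ) K ∑_{j=0}^{q-1} ∑_{m,n ≥ 1} m^{-(s-α)} n^{-s}
  e(m(-n+Kj)H̄/(Kq)) χ̄(j) χ(-n+Kj)`. -/
theorem A1_opened (q : ℕ) (hq : 1 ≤ q) (χ : DirichletCharacter ℂ q) (hχ : χ.IsPrimitive)
    (K : ℕ) (hK : 1 ≤ K) (H : ℤ)
    (hqK : Nat.Coprime q K) (hHq : Int.gcd H q = 1) (hHK : Int.gcd H K = 1)
    (Hbar : ℤ) (hHbar : ((K * q : ℕ) : ℤ) ∣ H * Hbar - 1) (hHbar0 : 0 < Hbar)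
    (hHbar1 : Hbar ≤ ((K * q : ℕ) : ℤ))
    (α s : ℂ) (hs : 1 + max 0 α.re < s.re) :
    ∑ u ∈ Finset.Icc 1 (K * q), ∑ v ∈ Finset.Icc 1 (K * q),
      χ (u : ZMod q) * χ (v : ZMod q) * e ((u * v : ℕ) * (H : ℝ) / (K * q)) *
        Fser (s - α) ((u : ℝ) / (K * q)) * Fser s ((v : ℝ) / (K * q)) =
      χ ((Hbar : ℤ) : ZMod q) * gaussTau q χ * (K : ℂ) *
        ∑ j ∈ Finset.range q, ∑' m : ℕ+, ∑' n : ℕ+,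
          ((m : ℕ) : ℂ) ^ (-(s - α)) * ((n : ℕ) : ℂ) ^ (-s) *
            e ((((m : ℤ) * (-(n : ℤ) + (K : ℤ) * (j : ℤ)) * Hbar : ℤ) : ℝ) / (K * q)) *
            (starRingEnd ℂ) (χ (j : ZMod q)) * χ (((-(n : ℤ) + (K : ℤ) * (j : ℤ)) : ℤ) : ZMod q) := by
  haveI : NeZero q := ⟨by omega⟩
  haveI : NeZero K := ⟨by omega⟩
  have hH1 : (H : ZMod (K * q)) * (Hbar : ZMod (K * q)) = 1 := by
    have h0 : ((H * Hbar - 1 : ℤ) : ZMod (K * q)) = 0 :=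
      (ZMod.intCast_zmod_eq_zero_iff_dvd _ _).2 hHbar
    push_cast at h0
    linear_combination h0
  have hp : 1 < (s - α).re := by
    rw [Complex.sub_re]
    have := le_max_right (0 : ℝ) α.re
    linarith
  have hr : 1 < s.re := by
    have := le_max_left (0 : ℝ) α.re
    linarith
  set fm : ℕ+ → ℂ := fun m => ((m : ℕ) : ℂ) ^ (-(s - α)) with hfm
  set gn : ℕ+ → ℂ := fun n => ((n : ℕ) : ℂ) ^ (-s) with hgn
  set T : ℕ → ℕ → ℕ+ → ℕ+ → ℂ := fun u v m n =>
    χ (u : ZMod q) * χ (v : ZMod q) * e ((u * v : ℕ) * (H : ℝ) / (K * q))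
      * (e ((m : ℝ) * ((u : ℝ) / (K * q))) * fm m)
      * (e ((n : ℝ) * ((v : ℝ) / (K * q))) * gn n) with hT
  have hnfm : ∀ m : ℕ+, ‖fm m‖ = (m : ℝ) ^ (-(s - α).re) := fun m => norm_cpow_pnat _ m
  have hngn : ∀ n : ℕ+, ‖gn n‖ = (n : ℝ) ^ (-s.re) := fun n => norm_cpow_pnat _ n
  have hTb : ∀ u v : ℕ, ∀ m n : ℕ+,
      ‖T u v m n‖ ≤ (m : ℝ) ^ (-(s - α).re) * (n : ℝ) ^ (-s.re) := by
    intro u v m n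
    have h1 := DirichletCharacter.norm_le_one χ (u : ZMod q)
    have h2 := DirichletCharacter.norm_le_one χ (v : ZMod q)
    have heq : ‖T u v m n‖
        = (‖χ (u : ZMod q)‖ * ‖χ (v : ZMod q)‖)
          * ((m : ℝ) ^ (-(s - α).re) * (n : ℝ) ^ (-s.re)) := by
      rw [hT]
      simp only [norm_mul, norm_e, hnfm, hngn]
      ring
    rw [heq]
    have hnn : (0 : ℝ) ≤ (m : ℝ) ^ (-(s - α).re) * (n : ℝ) ^ (-s.re) := by positivity
    calc (‖χ (u : ZMod q)‖ * ‖χ (v : ZMod q)‖)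
          * ((m : ℝ) ^ (-(s - α).re) * (n : ℝ) ^ (-s.re))
        ≤ (1 * 1) * ((m : ℝ) ^ (-(s - α).re) * (n : ℝ) ^ (-s.re)) := by
          apply mul_le_mul_of_nonneg_right _ hnn
          exact mul_le_mul h1 h2 (norm_nonneg _) zero_le_one
      _ = (m : ℝ) ^ (-(s - α).re) * (n : ℝ) ^ (-s.re) := by ring
  have hsum : ∀ u v : ℕ,
      (∀ m, Summable (T u v m)) ∧ Summable fun m => ∑' n, T u v m n :=
    fun u v => summable_of_bound hp hr (T u v) (hTb u v)
  -- Step A : pointwise expansion of the product of the two series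
  have stepA : ∀ u v : ℕ,
      χ (u : ZMod q) * χ (v : ZMod q) * e ((u * v : ℕ) * (H : ℝ) / (K * q))
        * Fser (s - α) ((u : ℝ) / (K * q)) * Fser s ((v : ℝ) / (K * q))
      = ∑' m : ℕ+, ∑' n : ℕ+, T u v m n := by
    intro u v
    simp only [Fser]
    set cc : ℂ := χ (u : ZMod q) * χ (v : ZMod q) * e ((u * v : ℕ) * (H : ℝ) / (K * q)) with hcc
    set am : ℕ+ → ℂ := fun m => e ((m : ℝ) * ((u : ℝ) / (K * q))) * fm m with ham
    set bn : ℕ+ → ℂ := fun n => e ((n : ℝ) * ((v : ℝ) / (K * q))) * gn n with hbn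
    have h1 : cc * (∑' m, am m) = ∑' m, cc * am m := tsum_mul_left.symm
    have h2 : (∑' m, cc * am m) * (∑' n, bn n) = ∑' m, cc * am m * (∑' n, bn n) :=
      tsum_mul_right.symm
    have h3 : ∀ m : ℕ+, cc * am m * (∑' n, bn n) = ∑' n, cc * am m * bn n :=
      fun m => tsum_mul_left.symm
    calc cc * (∑' m, am m) * (∑' n, bn n) = (∑' m, cc * am m) * (∑' n, bn n) := by rw [h1]
      _ = ∑' m, cc * am m * (∑' n, bn n) := h2
      _ = ∑' m, ∑' n, cc * am m * bn n := tsum_congr h3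
      _ = ∑' m, ∑' n, T u v m n := rfl
  calc ∑ u ∈ Finset.Icc 1 (K * q), ∑ v ∈ Finset.Icc 1 (K * q),
      χ (u : ZMod q) * χ (v : ZMod q) * e ((u * v : ℕ) * (H : ℝ) / (K * q)) *
        Fser (s - α) ((u : ℝ) / (K * q)) * Fser s ((v : ℝ) / (K * q))
      = ∑ u ∈ Finset.Icc 1 (K * q), ∑ v ∈ Finset.Icc 1 (K * q), ∑' m : ℕ+, ∑' n : ℕ+, T u v m n :=
      Finset.sum_congr rfl fun u _ => Finset.sum_congr rfl fun v _ => stepA u v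
    _ = ∑ u ∈ Finset.Icc 1 (K * q), ∑' m : ℕ+, ∑ v ∈ Finset.Icc 1 (K * q), ∑' n : ℕ+, T u v m n :=
      Finset.sum_congr rfl fun u _ => (Summable.tsum_finsetSum fun v _ => (hsum u v).2).symm
    _ = ∑' m : ℕ+, ∑ u ∈ Finset.Icc 1 (K * q), ∑ v ∈ Finset.Icc 1 (K * q), ∑' n : ℕ+, T u v m n :=
      (Summable.tsum_finsetSum fun u _ => summable_sum fun v _ => (hsum u v).2).symm
    _ = ∑' m : ℕ+, ∑' n : ℕ+, ∑ u ∈ Finset.Icc 1 (K * q), ∑ v ∈ Finset.Icc 1 (K * q), T u v m n := by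
      refine tsum_congr fun m => ?_
      calc ∑ u ∈ Finset.Icc 1 (K * q), ∑ v ∈ Finset.Icc 1 (K * q), ∑' n : ℕ+, T u v m n
          = ∑ u ∈ Finset.Icc 1 (K * q), ∑' n : ℕ+, ∑ v ∈ Finset.Icc 1 (K * q), T u v m n :=
          Finset.sum_congr rfl fun u _ => (Summable.tsum_finsetSum fun v _ => (hsum u v).1 m).symm
        _ = ∑' n : ℕ+, ∑ u ∈ Finset.Icc 1 (K * q), ∑ v ∈ Finset.Icc 1 (K * q), T u v m n :=
          (Summable.tsum_finsetSum fun u _ => summable_sum fun v _ => (hsum u v).1 m).symm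
    _ = ∑' m : ℕ+, ∑' n : ℕ+, fm m * gn n *
          (χ ((Hbar : ZMod q)) * gaussTau q χ * (K : ℂ)
            * ∑ j ∈ range q, χ⁻¹ (j : ZMod q) * χ (((-((n : ℕ) : ℤ) + K * j : ℤ) : ZMod q))
                * e (((((m : ℕ) : ℤ) * (-((n : ℕ) : ℤ) + K * j) * Hbar : ℤ) : ℝ) / (K * q))) := by
      refine tsum_congr fun m => tsum_congr fun n => ?_
      rw [← finite_part χ hχ H Hbar hH1 (m : ℕ) (n : ℕ)]
      simp only [Finset.mul_sum]
      refine Finset.sum_congr rfl fun u _ => Finset.sum_congr rfl fun v _ => ?_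
      rw [hT]
      simp only
      rw [show ((u * v : ℕ) : ℝ) * (H : ℝ) / ((K : ℝ) * (q : ℝ))
            = (((u * v * H : ℤ)) : ℝ) / ((K : ℝ) * (q : ℝ)) by push_cast; ring,
          show ((m : ℕ) : ℝ) * ((u : ℝ) / ((K : ℝ) * (q : ℝ)))
            = ((((m : ℕ) * u : ℤ)) : ℝ) / ((K : ℝ) * (q : ℝ)) by push_cast; ring,
          show ((n : ℕ) : ℝ) * ((v : ℝ) / ((K : ℝ) * (q : ℝ)))
            = ((((n : ℕ) * v : ℤ)) : ℝ) / ((K : ℝ) * (q : ℝ)) by push_cast; ring]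
      ring
    _ = χ ((Hbar : ℤ) : ZMod q) * gaussTau q χ * (K : ℂ) *
        ∑ j ∈ Finset.range q, ∑' m : ℕ+, ∑' n : ℕ+,
          ((m : ℕ) : ℂ) ^ (-(s - α)) * ((n : ℕ) : ℂ) ^ (-s) *
            e ((((m : ℤ) * (-(n : ℤ) + (K : ℤ) * (j : ℤ)) * Hbar : ℤ) : ℝ) / (K * q)) *
            (starRingEnd ℂ) (χ (j : ZMod q)) * χ (((-(n : ℤ) + (K : ℤ) * (j : ℤ)) : ℤ) : ZMod q) := by
      set κ : ℂ := χ ((Hbar : ZMod q)) * gaussTau q χ * (K : ℂ) with hκ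
      set Y : ℕ → ℕ+ → ℕ+ → ℂ := fun j m n => fm m * gn n *
        (χ⁻¹ (j : ZMod q) * χ (((-((n : ℕ) : ℤ) + K * j : ℤ) : ZMod q))
          * e (((((m : ℕ) : ℤ) * (-((n : ℕ) : ℤ) + K * j) * Hbar : ℤ) : ℝ) / (K * q))) with hY
      have hYb : ∀ j : ℕ, ∀ m n : ℕ+,
          ‖Y j m n‖ ≤ (m : ℝ) ^ (-(s - α).re) * (n : ℝ) ^ (-s.re) := by
        intro j m n
        have h1 : ‖χ⁻¹ ((j : ZMod q))‖ ≤ 1 := by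
          rw [← MulChar.star_apply', norm_star]
          exact DirichletCharacter.norm_le_one χ _
        have h2 := DirichletCharacter.norm_le_one χ (((-((n : ℕ) : ℤ) + K * j : ℤ) : ZMod q))
        have heq : ‖Y j m n‖ = ((m : ℝ) ^ (-(s - α).re) * (n : ℝ) ^ (-s.re))
            * (‖χ⁻¹ ((j : ZMod q))‖ * ‖χ (((-((n : ℕ) : ℤ) + K * j : ℤ) : ZMod q))‖) := by
          rw [hY]
          simp only [norm_mul, norm_e, hnfm, hngn]
          ring
        rw [heq]
        have hnn : (0 : ℝ) ≤ (m : ℝ) ^ (-(s - α).re) * (n : ℝ) ^ (-s.re) := by positivity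
        calc ((m : ℝ) ^ (-(s - α).re) * (n : ℝ) ^ (-s.re))
              * (‖χ⁻¹ ((j : ZMod q))‖ * ‖χ (((-((n : ℕ) : ℤ) + K * j : ℤ) : ZMod q))‖)
            ≤ ((m : ℝ) ^ (-(s - α).re) * (n : ℝ) ^ (-s.re)) * (1 * 1) :=
              mul_le_mul_of_nonneg_left
                (mul_le_mul h1 h2 (norm_nonneg _) zero_le_one) hnn
          _ = (m : ℝ) ^ (-(s - α).re) * (n : ℝ) ^ (-s.re) := by ring
      have hYsum : ∀ j : ℕ, (∀ m, Summable (Y j m)) ∧ Summable fun m => ∑' n, Y j m n :=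
        fun j => summable_of_bound hp hr (Y j) (hYb j)
      calc ∑' m : ℕ+, ∑' n : ℕ+, fm m * gn n * (κ * ∑ j ∈ range q,
              χ⁻¹ (j : ZMod q) * χ (((-((n : ℕ) : ℤ) + K * j : ℤ) : ZMod q))
                * e (((((m : ℕ) : ℤ) * (-((n : ℕ) : ℤ) + K * j) * Hbar : ℤ) : ℝ) / (K * q)))
          = ∑' m : ℕ+, ∑' n : ℕ+, κ * ∑ j ∈ range q, Y j m n := by
            refine tsum_congr fun m => tsum_congr fun n => ?_
            simp only [Finset.mul_sum, hY]
            refine Finset.sum_congr rfl fun j _ => by ring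
        _ = κ * ∑' m : ℕ+, ∑' n : ℕ+, ∑ j ∈ range q, Y j m n := by
            rw [← tsum_mul_left]
            exact tsum_congr fun m => by rw [← tsum_mul_left]
        _ = κ * ∑' m : ℕ+, ∑ j ∈ range q, ∑' n : ℕ+, Y j m n := by
            congr 1
            exact tsum_congr fun m => Summable.tsum_finsetSum fun j _ => (hYsum j).1 m
        _ = κ * ∑ j ∈ range q, ∑' m : ℕ+, ∑' n : ℕ+, Y j m n := by
            congr 1
            exact Summable.tsum_finsetSum fun j _ => (hYsum j).2
        _ = _ := by
            rw [hκ]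
            congr 1
            refine Finset.sum_congr rfl fun j _ => tsum_congr fun m => tsum_congr fun n => ?_
            rw [hY]
            simp only
            rw [starRingEnd_apply, MulChar.star_apply']
            rw [show ((m : ℤ) * (-(n : ℤ) + (K : ℤ) * (j : ℤ)) * Hbar : ℤ)
                = (((m : ℕ) : ℤ) * (-((n : ℕ) : ℤ) + K * j) * Hbar : ℤ) by push_cast; ring,
              show ((-(n : ℤ) + (K : ℤ) * (j : ℤ)) : ℤ) = ((-((n : ℕ) : ℤ) + K * j : ℤ)) by
                push_cast; ring]
            ring
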